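/- Let Ω ⊆ ℝ^N be open and φ : Ω → ℝ everywhere differentiable with |∇φ| = 1 in Ω. Then ∇φ is continuous on Ω, i.e., φ is C¹ on Ω. -/

import Mathlib

open Metric Set InnerProductSpace Filter Topology

variable {N : ℕ}

local notation "E" => EuclideanSpace ℝ (Fin N)

lemma norm_grad_eq (φ : E → ℝ) (x : E) : ‖gradient φ x‖ = ‖fderiv ℝ φ x‖ := by
  rw [gradient]
  exact (toDual ℝ (EuclideanSpace ℝ (Fin N))).symm.norm_map _

lemma sphere_touch {Ω : Set (EuclideanSpace ℝ (Fin N))} (φ : E → ℝ)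
    (hdiff : ∀ x ∈ Ω, DifferentiableAt ℝ φ x)
    (heik : ∀ x ∈ Ω, ‖gradient φ x‖ = 1)
    {x : E} {ρ : ℝ} (hρ : 0 < ρ) (hsub : closedBall x ρ ⊆ Ω)
    {a ε : ℝ} (ha : a ∈ Set.Ioo (0:ℝ) 1) (hε : 0 < ε) :
    ∃ y, ‖y - x‖ = ρ ∧ φ x - a * ε ≤ φ y - a * Real.sqrt (ρ^2 + ε^2) := by
  set ψ : E → ℝ := fun y => φ y - a * Real.sqrt (‖y - x‖^2 + ε^2) with hψdef
  have hcont2 : Continuous fun y : E => a * Real.sqrt (‖y - x‖^2 + ε^2) := by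
    fun_prop
  have hcont : ContinuousOn ψ (closedBall x ρ) :=
    ContinuousOn.sub (fun y hy => ((hdiff y (hsub hy)).continuousAt).continuousWithinAt)
      hcont2.continuousOn
  obtain ⟨y₀, hy₀mem, hy₀max⟩ := (isCompact_closedBall x ρ).exists_isMaxOn
    ⟨x, mem_closedBall_self hρ.le⟩ hcont
  have hy₀le : ‖y₀ - x‖ ≤ ρ := mem_closedBall_iff_norm.1 hy₀mem
  rcases eq_or_lt_of_le hy₀le with heq | hlt
  · refine ⟨y₀, heq, ?_⟩
    have h1 : ψ x ≤ ψ y₀ := hy₀max (mem_closedBall_self hρ.le)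
    have h2 : ψ x = φ x - a * ε := by
      simp only [hψdef, sub_self, norm_zero]
      rw [show (0:ℝ)^2 + ε^2 = ε^2 by ring, Real.sqrt_sq hε.le]
    have h3 : ψ y₀ = φ y₀ - a * Real.sqrt (ρ^2 + ε^2) := by
      simp only [hψdef, heq]
    linarith [h1, h2.symm.le, h3.le]
  · exfalso
    have hmax' : IsLocalMax ψ y₀ :=
      hy₀max.isLocalMax (Filter.mem_of_superset
        (isOpen_ball.mem_nhds (mem_ball_iff_norm.2 hlt)) ball_subset_closedBall)
    have hy₀Ω : y₀ ∈ Ω := hsub hy₀mem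
    have hqpos : (0:ℝ) < ‖y₀ - x‖^2 + ε^2 := by positivity
    have hQpos : 0 < Real.sqrt (‖y₀ - x‖^2 + ε^2) := Real.sqrt_pos.2 hqpos
    have hq := (((hasFDerivAt_id y₀).sub_const x).norm_sq).add_const (ε^2)
    have hs' := hq.sqrt (ne_of_gt hqpos)
    have hψ' := ((hdiff y₀ hy₀Ω).hasFDerivAt).sub (hs'.const_mul a)
    simp only [id_eq] at hψ'
    have hz : fderiv ℝ ψ y₀ = 0 := hmax'.fderiv_eq_zero
    have hLeq : fderiv ℝ φ y₀ = a • ((1 / (2 * Real.sqrt (‖y₀ - x‖^2 + ε^2))) •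
        ((2:ℕ) • ((innerSL ℝ (y₀ - x)).comp
          (ContinuousLinearMap.id ℝ (EuclideanSpace ℝ (Fin N)))))) := by
      have h : fderiv ℝ ψ y₀ = fderiv ℝ φ y₀ -
          a • ((1 / (2 * Real.sqrt (‖y₀ - x‖^2 + ε^2))) •
          ((2:ℕ) • ((innerSL ℝ (y₀ - x)).comp
            (ContinuousLinearMap.id ℝ (EuclideanSpace ℝ (Fin N)))))) := hψ'.fderiv
      rw [hz] at h
      exact sub_eq_zero.1 h.symm
    have hnorm : ‖fderiv ℝ φ y₀‖
        = a * ((1 / (2 * Real.sqrt (‖y₀ - x‖^2 + ε^2))) * (2 * ‖y₀ - x‖)) := by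
      rw [hLeq, norm_smul, norm_smul, ← Nat.cast_smul_eq_nsmul ℝ, norm_smul,
        ContinuousLinearMap.comp_id, innerSL_apply_norm]
      rw [Real.norm_eq_abs, Real.norm_eq_abs, Real.norm_eq_abs,
        abs_of_pos ha.1, abs_of_pos (by positivity : (0:ℝ) < 1 / (2 * Real.sqrt (‖y₀ - x‖^2 + ε^2)))]
      norm_num
    have hQgt : ‖y₀ - x‖ < Real.sqrt (‖y₀ - x‖^2 + ε^2) := by
      calc ‖y₀ - x‖ = Real.sqrt (‖y₀ - x‖^2) := (Real.sqrt_sq (norm_nonneg _)).symm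
        _ < Real.sqrt (‖y₀ - x‖^2 + ε^2) := by
            apply Real.sqrt_lt_sqrt (by positivity)
            nlinarith
    have h1 : (1:ℝ) = ‖fderiv ℝ φ y₀‖ := by rw [← norm_grad_eq, heik y₀ hy₀Ω]
    rw [hnorm] at h1
    have hsimp : a * ((1 / (2 * Real.sqrt (‖y₀ - x‖^2 + ε^2))) * (2 * ‖y₀ - x‖))
        = a * (‖y₀ - x‖ / Real.sqrt (‖y₀ - x‖^2 + ε^2)) := by
      field_simp
    rw [hsimp] at h1
    have hlt1 : ‖y₀ - x‖ / Real.sqrt (‖y₀ - x‖^2 + ε^2) < 1 := (div_lt_one hQpos).2 hQgt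
    nlinarith [ha.1, ha.2, norm_nonneg (y₀ - x), hQpos]

lemma norm_grad_eq' (φ : E → ℝ) (x : E) : ‖gradient φ x‖ = ‖fderiv ℝ φ x‖ := by
  rw [gradient]
  exact (toDual ℝ (EuclideanSpace ℝ (Fin N))).symm.norm_map _

lemma fderiv_apply_inner' (φ : E → ℝ) (x v : E) :
    fderiv ℝ φ x v = ⟪gradient φ x, v⟫_ℝ := by
  rw [gradient, toDual_symm_apply]

lemma unit_inner_eq {u v : EuclideanSpace ℝ (Fin N)} (hu : ‖u‖ = 1) (hv : ‖v‖ = 1)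
    (h : ⟪u, v⟫_ℝ = 1) : u = v := by
  have h0 : ‖u - v‖^2 = 0 := by
    rw [norm_sub_sq_real, hu, hv, h]; ring
  have h1 : ‖u - v‖ = 0 := by
    have := sq_eq_zero_iff.mp h0
    exact this
  exact sub_eq_zero.1 (norm_eq_zero.1 h1)

lemma inner_grad_eq_one {Ω : Set (EuclideanSpace ℝ (Fin N))} (φ : E → ℝ)
    (hdiff : ∀ x ∈ Ω, DifferentiableAt ℝ φ x) {x : E} (hx : x ∈ Ω)
    {w : E} {δ : ℝ} (hδ : 0 < δ)
    (hseg : ∀ s ∈ Icc (0:ℝ) δ, φ (x + s • w) = φ x + s) :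
    ⟪gradient φ x, w⟫_ℝ = 1 := by
  have hc : HasDerivAt (fun s : ℝ => x + s • w) w 0 := by
    simpa using ((hasDerivAt_id (0:ℝ)).smul_const w).const_add x
  have hF : HasFDerivAt φ (fderiv ℝ φ x) ((fun s : ℝ => x + s • w) 0) := by
    simpa using (hdiff x hx).hasFDerivAt
  have hg : HasDerivAt (fun s : ℝ => φ (x + s • w)) (fderiv ℝ φ x w) 0 :=
    hF.comp_hasDerivAt 0 hc
  have hgW : HasDerivWithinAt (fun s : ℝ => φ (x + s • w)) (fderiv ℝ φ x w) (Icc 0 δ) 0 :=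
    hg.hasDerivWithinAt
  have hlin : HasDerivWithinAt (fun s : ℝ => φ (x + s • w)) 1 (Icc 0 δ) 0 := by
    have h1 : HasDerivWithinAt (fun s : ℝ => φ x + s) 1 (Icc 0 δ) 0 := by
      exact ((hasDerivAt_id (0:ℝ)).const_add (φ x)).hasDerivWithinAt (s := Icc (0:ℝ) δ)
    exact h1.congr (fun s hs => hseg s hs) (by simp)
  have hU : UniqueDiffWithinAt ℝ (Icc (0:ℝ) δ) 0 :=
    (uniqueDiffOn_Icc hδ) 0 ⟨le_refl 0, hδ.le⟩
  have : fderiv ℝ φ x w = 1 := (hgW.derivWithin hU).symm.trans (hlin.derivWithin hU)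
  rw [← fderiv_apply_inner']
  exact this

lemma lip_on_ball {Ω : Set (EuclideanSpace ℝ (Fin N))} (φ : E → ℝ)
    (hdiff : ∀ x ∈ Ω, DifferentiableAt ℝ φ x)
    (heik : ∀ x ∈ Ω, ‖gradient φ x‖ = 1)
    {x : E} {r : ℝ} (hsub : closedBall x r ⊆ Ω) :
    ∀ a ∈ closedBall x r, ∀ b ∈ closedBall x r, φ b - φ a ≤ ‖b - a‖ := by
  intro a ha b hb
  have := (convex_closedBall x r).norm_image_sub_le_of_norm_fderiv_le
    (fun y hy => hdiff y (hsub hy))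
    (fun y hy => by rw [← norm_grad_eq' φ y, heik y (hsub hy)]) ha hb
  rw [one_mul] at this
  calc φ b - φ a ≤ |φ b - φ a| := le_abs_self _
    _ ≤ ‖b - a‖ := by rwa [Real.norm_eq_abs] at this

lemma sphere_exact {Ω : Set (EuclideanSpace ℝ (Fin N))} (φ : E → ℝ)
    (hdiff : ∀ x ∈ Ω, DifferentiableAt ℝ φ x)
    (heik : ∀ x ∈ Ω, ‖gradient φ x‖ = 1)
    {x : E} {ρ : ℝ} (hρ : 0 < ρ) (hsub : closedBall x ρ ⊆ Ω) :
    ∃ y, ‖y - x‖ = ρ ∧ φ y = φ x + ρ := by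
  have hsphere_sub : sphere x ρ ⊆ closedBall x ρ := sphere_subset_closedBall
  obtain ⟨y₁, hy₁, -⟩ := sphere_touch φ hdiff heik hρ hsub
    (a := 1/2) (ε := 1) ⟨by norm_num, by norm_num⟩ one_pos
  have hne : (sphere x ρ).Nonempty := ⟨y₁, by simpa [mem_sphere_iff_norm] using hy₁⟩
  obtain ⟨y, hymem, hymax⟩ := (isCompact_sphere x ρ).exists_isMaxOn hne
    (fun z hz => ((hdiff z (hsub (hsphere_sub hz))).continuousAt).continuousWithinAt)
  have hynorm : ‖y - x‖ = ρ := mem_sphere_iff_norm.1 hymem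
  refine ⟨y, hynorm, ?_⟩
  have hub : φ y - φ x ≤ ρ := by
    have := lip_on_ball φ hdiff heik hsub x (mem_closedBall_self hρ.le) y (hsphere_sub hymem)
    rwa [hynorm] at this
  have hlb : ∀ n : ℕ, φ x + (1 - 1/((n:ℝ)+2)) * (ρ - 1/((n:ℝ)+2)) ≤ φ y := by
    intro n
    have hn2 : (0:ℝ) < 1/((n:ℝ)+2) := by positivity
    have hn3 : 1/((n:ℝ)+2) < 1 := by
      rw [div_lt_one (by positivity)]
      have : (0:ℝ) ≤ (n:ℝ) := Nat.cast_nonneg n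
      linarith
    obtain ⟨z, hz, hzineq⟩ := sphere_touch φ hdiff heik hρ hsub
      (a := 1 - 1/((n:ℝ)+2)) (ε := 1/((n:ℝ)+2)) ⟨by linarith, by linarith⟩ hn2
    have hsq : ρ ≤ Real.sqrt (ρ^2 + (1/((n:ℝ)+2))^2) := by
      calc ρ = Real.sqrt (ρ^2) := (Real.sqrt_sq hρ.le).symm
        _ ≤ _ := Real.sqrt_le_sqrt (by nlinarith [sq_nonneg (1/((n:ℝ)+2))])
    have hzy : φ z ≤ φ y := hymax (mem_sphere_iff_norm.2 hz)
    nlinarith [hzineq, hsq, hzy, hn2, hn3]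
  have htend : Tendsto (fun n : ℕ => φ x + (1 - 1/((n:ℝ)+2)) * (ρ - 1/((n:ℝ)+2)))
      atTop (𝓝 (φ x + (1 - 0) * (ρ - 0))) := by
    have h0 : Tendsto (fun n : ℕ => 1/((n:ℝ)+2)) atTop (𝓝 0) := by
      apply squeeze_zero (fun n => by positivity) (g := fun n : ℕ => 1/((n:ℝ)+1))
      · intro n
        exact one_div_le_one_div_of_le (by positivity)
          (by linarith [Nat.cast_nonneg (α := ℝ) n] : (n:ℝ) + 1 ≤ (n:ℝ) + 2)
      · exact tendsto_one_div_add_atTop_nhds_zero_nat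
    exact tendsto_const_nhds.add ((tendsto_const_nhds.sub h0).mul (tendsto_const_nhds.sub h0))
  have hfin : φ x + ρ ≤ φ y := by
    have := le_of_tendsto htend (Filter.Eventually.of_forall hlb)
    simpa using this
  linarith

lemma segment_eq {Ω : Set (EuclideanSpace ℝ (Fin N))} (φ : E → ℝ)
    (hdiff : ∀ x ∈ Ω, DifferentiableAt ℝ φ x)
    (heik : ∀ x ∈ Ω, ‖gradient φ x‖ = 1)
    {x : E} {ρ : ℝ} (hρ : 0 < ρ) (hsub : closedBall x ρ ⊆ Ω)
    {w : E} (hw : ‖w‖ = 1) (hy : φ (x + ρ • w) = φ x + ρ) :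
    ∀ s ∈ Icc (0:ℝ) ρ, φ (x + s • w) = φ x + s := by
  rintro s ⟨hs0, hsρ⟩
  have hmem : ∀ t : ℝ, 0 ≤ t → t ≤ ρ → x + t • w ∈ closedBall x ρ := by
    intro t ht0 htρ
    rw [mem_closedBall_iff_norm, add_sub_cancel_left, norm_smul, hw, mul_one,
      Real.norm_eq_abs, abs_of_nonneg ht0]
    exact htρ
  have h1 := lip_on_ball φ hdiff heik hsub (x + s • w) (hmem s hs0 hsρ)
    (x + ρ • w) (hmem ρ hρ.le le_rfl)
  have h2 := lip_on_ball φ hdiff heik hsub x (mem_closedBall_self hρ.le)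
    (x + s • w) (hmem s hs0 hsρ)
  have e1 : (x + ρ • w) - (x + s • w) = (ρ - s) • w := by module
  have e2 : (x + s • w) - x = s • w := by module
  rw [e1, norm_smul, hw, mul_one, Real.norm_eq_abs, abs_of_nonneg (by linarith)] at h1
  rw [e2, norm_smul, hw, mul_one, Real.norm_eq_abs, abs_of_nonneg hs0] at h2
  linarith

lemma grad_segment {Ω : Set (EuclideanSpace ℝ (Fin N))} (φ : E → ℝ)
    (hdiff : ∀ x ∈ Ω, DifferentiableAt ℝ φ x)
    (heik : ∀ x ∈ Ω, ‖gradient φ x‖ = 1)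
    {x : E} {ρ : ℝ} (hρ : 0 < ρ) (hsub : closedBall x ρ ⊆ Ω) :
    ∀ s ∈ Icc (0:ℝ) ρ, φ (x + s • gradient φ x) = φ x + s := by
  obtain ⟨y, hy, hyval⟩ := sphere_exact φ hdiff heik hρ hsub
  set w : EuclideanSpace ℝ (Fin N) := ρ⁻¹ • (y - x) with hwdef
  have hw : ‖w‖ = 1 := by
    rw [hwdef, norm_smul, hy, Real.norm_eq_abs, abs_of_pos (inv_pos.2 hρ)]
    field_simp
  have hxy : x + ρ • w = y := by
    rw [hwdef, smul_smul, mul_inv_cancel₀ hρ.ne', one_smul, add_sub_cancel]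
  have hseg := segment_eq φ hdiff heik hρ hsub hw (by rw [hxy]; exact hyval)
  have hxΩ : x ∈ Ω := hsub (mem_closedBall_self hρ.le)
  have hinner := inner_grad_eq_one φ hdiff hxΩ hρ hseg
  have hgw : gradient φ x = w := unit_inner_eq (heik x hxΩ) hw hinner
  intro s hs
  rw [hgw]
  exact hseg s hs

theorem eikonal_gradient_continuous {N : ℕ} {Ω : Set (EuclideanSpace ℝ (Fin N))}
    (hΩ : IsOpen Ω) (φ : EuclideanSpace ℝ (Fin N) → ℝ)
    (hdiff : ∀ x ∈ Ω, DifferentiableAt ℝ φ x)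
    (heik : ∀ x ∈ Ω, ‖gradient φ x‖ = 1) :
    ContinuousOn (fun x => gradient φ x) Ω := by
  intro x₀ hx₀
  apply ContinuousAt.continuousWithinAt
  obtain ⟨ε, hε, hball⟩ := Metric.isOpen_iff.1 hΩ x₀ hx₀
  set ρ := ε/4 with hρdef
  have hρ : 0 < ρ := by positivity
  have hsub3 : closedBall x₀ (3*ρ) ⊆ Ω := by
    intro z hz
    apply hball
    rw [mem_ball]
    calc dist z x₀ ≤ 3*ρ := mem_closedBall.1 hz
      _ < ε := by rw [hρdef]; linarith
  have hballΩ : ball x₀ ρ ⊆ Ω := fun z hz => hsub3 (by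
    rw [mem_closedBall]
    have := mem_ball.1 hz
    linarith)
  have hkey : ∀ y ∈ ball x₀ ρ, ∀ s ∈ Icc (0:ℝ) ρ,
      φ (y + s • gradient φ y) = φ y + s := by
    intro y hy
    apply grad_segment φ hdiff heik hρ
    intro z hz
    apply hsub3
    rw [mem_closedBall]
    calc dist z x₀ ≤ dist z y + dist y x₀ := dist_triangle z y x₀
      _ ≤ ρ + ρ := add_le_add (mem_closedBall.1 hz) (mem_ball.1 hy).le
      _ ≤ 3*ρ := by linarith
  unfold ContinuousAt
  apply tendsto_of_subseq_tendsto
  intro ns hns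
  have hev : ∀ᶠ n in atTop, ns n ∈ ball x₀ ρ :=
    hns.eventually_mem (isOpen_ball.mem_nhds (mem_ball_self hρ))
  obtain ⟨K, hK⟩ := eventually_atTop.1 hev
  set vs : ℕ → EuclideanSpace ℝ (Fin N) := fun n => ns (n + K) with hvsdef
  have hvs_mem : ∀ n, vs n ∈ ball x₀ ρ := fun n => hK _ (Nat.le_add_left K n)
  have hvs_tend : Tendsto vs atTop (𝓝 x₀) := hns.comp (tendsto_add_atTop_nat K)
  have hq_mem : ∀ n, gradient φ (vs n) ∈ sphere (0 : EuclideanSpace ℝ (Fin N)) 1 := by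
    intro n
    rw [mem_sphere_iff_norm, sub_zero]
    exact heik _ (hballΩ (hvs_mem n))
  obtain ⟨p, hp_mem, ms, hms_mono, hms_tend⟩ :=
    (isCompact_sphere (0 : EuclideanSpace ℝ (Fin N)) 1).tendsto_subseq hq_mem
  have hp_norm : ‖p‖ = 1 := by
    have := mem_sphere_iff_norm.1 hp_mem
    rwa [sub_zero] at this
  have hzs_tend : Tendsto (fun n => vs (ms n)) atTop (𝓝 x₀) :=
    hvs_tend.comp hms_mono.tendsto_atTop
  have hpseg : ∀ s ∈ Icc (0:ℝ) ρ, φ (x₀ + s • p) = φ x₀ + s := by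
    rintro s ⟨hs0, hsρ⟩
    have hmemΩ : x₀ + s • p ∈ Ω := by
      apply hsub3
      rw [mem_closedBall, dist_eq_norm, add_sub_cancel_left, norm_smul, hp_norm,
        mul_one, Real.norm_eq_abs, abs_of_nonneg hs0]
      linarith
    have hcφ : ContinuousAt φ (x₀ + s • p) := (hdiff _ hmemΩ).continuousAt
    have hcφ₀ : ContinuousAt φ x₀ := (hdiff _ hx₀).continuousAt
    have harg : Tendsto (fun n => vs (ms n) + s • gradient φ (vs (ms n))) atTop
        (𝓝 (x₀ + s • p)) := by
      apply hzs_tend.add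
      exact hms_tend.const_smul s
    have hL : Tendsto (fun n => φ (vs (ms n) + s • gradient φ (vs (ms n)))) atTop
        (𝓝 (φ (x₀ + s • p))) := hcφ.tendsto.comp harg
    have hR : Tendsto (fun n => φ (vs (ms n)) + s) atTop (𝓝 (φ x₀ + s)) :=
      (hcφ₀.tendsto.comp hzs_tend).add_const s
    have heqn : ∀ n, φ (vs (ms n) + s • gradient φ (vs (ms n))) = φ (vs (ms n)) + s :=
      fun n => hkey _ (hvs_mem (ms n)) s ⟨hs0, hsρ⟩
    have : Tendsto (fun n => φ (vs (ms n)) + s) atTop (𝓝 (φ (x₀ + s • p))) := by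
      simpa only [heqn] using hL
    exact tendsto_nhds_unique this hR
  have hinner := inner_grad_eq_one φ hdiff hx₀ hρ hpseg
  have hgp : gradient φ x₀ = p := unit_inner_eq (heik x₀ hx₀) hp_norm hinner
  refine ⟨fun n => ms n + K, ?_⟩
  have : Tendsto (fun n => gradient φ (vs (ms n))) atTop (𝓝 p) := hms_tend
  rw [← hgp] at this
  exact this
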